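/- Let d ≥ 3, γ ∈ [0, d-2], and let m be a weight of one of the two forms m(v) = exp(-a|v|^s) with a > 0, s ∈ (0,1], or m(v) = (1+|v|^β)^{-1} with β > 0; let ν be the measure on ℝ^d with density m(v)^{-1} with respect to Lebesgue measure. Then for every p with 1 < p < d/(d-γ-1) there exists C > 0 (depending on d, γ, the weight and p) such that for every Borel set A ⊆ ℝ^d and every w ∈ ℝ^d, ∫_A |v-w|^{γ+1-d} m(v)^{-1} dv ≤ C ( m(w)^{-1/p} ν(A)^{1/q} + ν(A) ), where 1/p + 1/q = 1. -/

import Mathlib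

open MeasureTheory Real Metric Set Filter ENNReal

noncomputable section

abbrev Euc (d : ℕ) := EuclideanSpace ℝ (Fin d)

/-- The normalized Maxwellian `M(v) = (2π)^{-d/2} exp(-|v|²/2)`. -/
def Maxw (d : ℕ) (v : Euc d) : ℝ := (2 * π) ^ (-(d : ℝ) / 2) * Real.exp (-‖v‖ ^ 2 / 2)

private lemma finiteK {E : Type*} [NormedAddCommGroup E] [NormedSpace ℝ E]
    [FiniteDimensional ℝ E] [MeasurableSpace E] [BorelSpace E]
    (μ : Measure E) [μ.IsAddHaarMeasure] {α : ℝ} (hα : 0 < α)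
    (hαd : α < Module.finrank ℝ E) :
    ∫⁻ x in Metric.ball (0 : E) 1, ENNReal.ofReal (‖x‖ ^ (-α)) ∂μ < ∞ := by
  set n : ℕ := Module.finrank ℝ E with hn
  have hmeas : Measurable fun x : E => ‖x‖ ^ (-α) := by fun_prop
  have hnn : ∀ x : E, 0 ≤ ‖x‖ ^ (-α) := fun x => Real.rpow_nonneg (norm_nonneg x) _
  rw [lintegral_eq_lintegral_meas_le _ (Eventually.of_forall hnn) hmeas.aemeasurable]
  set ν := μ.restrict (Metric.ball (0 : E) 1) with hν
  have hmB : μ (Metric.ball (0 : E) 1) < ∞ := measure_ball_lt_top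
  calc
    ∫⁻ t in Ioi (0 : ℝ), ν {a | t ≤ ‖a‖ ^ (-α)}
        ≤ ∫⁻ t in Ioc (0 : ℝ) 1 ∪ Ioi 1, ν {a | t ≤ ‖a‖ ^ (-α)} :=
      lintegral_mono_set Ioi_subset_Ioc_union_Ioi
    _ ≤ (∫⁻ t in Ioc (0 : ℝ) 1, ν {a | t ≤ ‖a‖ ^ (-α)}) +
        ∫⁻ t in Ioi (1 : ℝ), ν {a | t ≤ ‖a‖ ^ (-α)} := lintegral_union_le _ _ _
    _ < ∞ := ENNReal.add_lt_top.2 ⟨?_, ?_⟩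
  · calc
      (∫⁻ t in Ioc (0 : ℝ) 1, ν {a | t ≤ ‖a‖ ^ (-α)})
          ≤ ∫⁻ _ in Ioc (0 : ℝ) 1, μ (Metric.ball (0 : E) 1) := by
        refine setLIntegral_mono' measurableSet_Ioc fun t _ => ?_
        calc ν {a | t ≤ ‖a‖ ^ (-α)} ≤ ν univ := measure_mono (subset_univ _)
          _ = μ (Metric.ball (0 : E) 1) := by
            rw [hν, Measure.restrict_apply_univ]
      _ = μ (Metric.ball (0 : E) 1) * volume (Ioc (0 : ℝ) 1) := setLIntegral_const _ _
      _ < ∞ := by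
        apply ENNReal.mul_lt_top hmB
        simp [Real.volume_Ioc]
  · have key : ∀ t ∈ Ioi (1 : ℝ),
        ν {a | t ≤ ‖a‖ ^ (-α)} ≤
          ENNReal.ofReal (t ^ (-α⁻¹ * n)) * μ (Metric.ball (0 : E) 1) := by
      intro t ht
      have ht1 : (1 : ℝ) < t := ht
      have ht0 : (0 : ℝ) < t := lt_trans one_pos ht1
      have hsub : {a : E | t ≤ ‖a‖ ^ (-α)} ⊆ Metric.closedBall 0 (t ^ (-α⁻¹)) := by
        intro a ha
        simp only [mem_setOf_eq] at ha
        rcases eq_or_ne a 0 with rfl | h0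
        · exfalso
          rw [norm_zero, Real.zero_rpow (by simp [neg_eq_zero]; exact hα.ne')] at ha
          linarith
        · have hna : (0 : ℝ) < ‖a‖ := norm_pos_iff.2 h0
          have h2 : (‖a‖ ^ (-α)) ^ (-α⁻¹) ≤ t ^ (-α⁻¹) :=
            Real.rpow_le_rpow_of_nonpos ht0 ha (neg_nonpos.2 (inv_nonneg.2 hα.le))
          rw [← Real.rpow_mul (norm_nonneg a)] at h2
          have : -α * -α⁻¹ = 1 := by field_simp
          rw [this, Real.rpow_one] at h2
          exact mem_closedBall_zero_iff.2 h2
      calc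
        ν {a | t ≤ ‖a‖ ^ (-α)} ≤ μ {a : E | t ≤ ‖a‖ ^ (-α)} := Measure.restrict_apply_le _ _
        _ ≤ μ (Metric.closedBall 0 (t ^ (-α⁻¹))) := measure_mono hsub
        _ = ENNReal.ofReal ((t ^ (-α⁻¹)) ^ n) * μ (Metric.ball (0 : E) 1) :=
          μ.addHaar_closedBall 0 (Real.rpow_nonneg ht0.le _)
        _ = ENNReal.ofReal (t ^ (-α⁻¹ * n)) * μ (Metric.ball (0 : E) 1) := by
          rw [← Real.rpow_natCast (t ^ (-α⁻¹)) n, ← Real.rpow_mul ht0.le]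
    calc
      ∫⁻ t in Ioi (1 : ℝ), ν {a | t ≤ ‖a‖ ^ (-α)}
          ≤ ∫⁻ t in Ioi (1 : ℝ),
              ENNReal.ofReal (t ^ (-α⁻¹ * n)) * μ (Metric.ball (0 : E) 1) :=
        setLIntegral_mono' measurableSet_Ioi key
      _ = (∫⁻ t in Ioi (1 : ℝ), ENNReal.ofReal (t ^ (-α⁻¹ * n))) *
            μ (Metric.ball (0 : E) 1) := lintegral_mul_const' _ _ hmB.ne
      _ < ∞ := by
        apply ENNReal.mul_lt_top _ hmB
        apply IntegrableOn.setLIntegral_lt_top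
        apply integrableOn_Ioi_rpow_of_lt _ one_pos
        have hd0 : (0 : ℝ) < n := lt_of_le_of_lt hα.le hαd
        rw [neg_mul, neg_lt_neg_iff]
        rw [inv_mul_eq_div, lt_div_iff₀ hα]
        linarith
/-- Translation invariance of the singular integral over the unit ball. -/
private lemma transK {E : Type*} [NormedAddCommGroup E] [MeasurableSpace E] [BorelSpace E]
    {μ : Measure E} [μ.IsAddHaarMeasure] (α : ℝ) (w : E) :
    ∫⁻ v in Metric.ball w 1, ENNReal.ofReal (‖v - w‖ ^ (-α)) ∂μ =
      ∫⁻ x in Metric.ball (0 : E) 1, ENNReal.ofReal (‖x‖ ^ (-α)) ∂μ := by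
  rw [← lintegral_indicator measurableSet_ball, ← lintegral_indicator measurableSet_ball]
  rw [← lintegral_add_right_eq_self
    (fun v => (Metric.ball w 1).indicator
      (fun v => ENNReal.ofReal (‖v - w‖ ^ (-α))) v) w]
  congr 1
  ext x
  by_cases hx : x ∈ Metric.ball (0 : E) 1
  · have hx' : x + w ∈ Metric.ball w 1 := by
      rw [mem_ball_iff_norm] at *
      simpa using hx
    rw [Set.indicator_of_mem hx', Set.indicator_of_mem hx]
    simp
  · have hx' : x + w ∉ Metric.ball w 1 := by
      rw [mem_ball_iff_norm] at *
      simpa using hx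
    rw [Set.indicator_of_notMem hx', Set.indicator_of_notMem hx]

/-- The uniform-integrability estimate (DP11). -/
theorem uniform_integrability_DP11
    (d : ℕ) (hd : 3 ≤ d) (γ : ℝ) (hγ : γ ∈ Set.Icc (0 : ℝ) ((d : ℝ) - 2))
    (m : Euc d → ℝ)
    (hm : (∃ a s : ℝ, 0 < a ∧ s ∈ Set.Ioc (0 : ℝ) 1 ∧
            ∀ v : Euc d, m v = Real.exp (-(a * ‖v‖ ^ s)))
        ∨ (∃ β : ℝ, 0 < β ∧ ∀ v : Euc d, m v = (1 + ‖v‖ ^ β)⁻¹))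
    (p q : ℝ) (hp : 1 < p) (hpd : p < (d : ℝ) / ((d : ℝ) - γ - 1)) (hq : 1 / p + 1 / q = 1) :
    ∃ C : ℝ, 0 < C ∧ ∀ A : Set (Euc d), MeasurableSet A → ∀ w : Euc d,
      ∫⁻ v in A, ENNReal.ofReal (‖v - w‖ ^ (γ + 1 - (d : ℝ)) * (m v)⁻¹)
        ≤ ENNReal.ofReal C *
            (ENNReal.ofReal ((m w)⁻¹ ^ (1 / p)) *
                (∫⁻ v in A, ENNReal.ofReal ((m v)⁻¹)) ^ (1 / q)
              + ∫⁻ v in A, ENNReal.ofReal ((m v)⁻¹)) := by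
  -- positivity of the weight
  have hmpos : ∀ v : Euc d, 0 < m v := by
    rcases hm with ⟨a, s, ha, hs, hfor⟩ | ⟨β, hβ, hfor⟩
    · intro v; rw [hfor]; exact Real.exp_pos _
    · intro v; rw [hfor]
      have : (0:ℝ) ≤ ‖v‖ ^ β := Real.rpow_nonneg (norm_nonneg _) _
      positivity
  have hmmeas : Measurable m := by
    rcases hm with ⟨a, s, ha, hs, hfor⟩ | ⟨β, hβ, hfor⟩
    · have : m = fun v : Euc d => Real.exp (-(a * ‖v‖ ^ s)) := funext hfor
      rw [this]; fun_prop
    · have : m = fun v : Euc d => (1 + ‖v‖ ^ β)⁻¹ := funext hfor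
      rw [this]; fun_prop
  have hinvpos : ∀ v : Euc d, 0 < (m v)⁻¹ := fun v => inv_pos.2 (hmpos v)
  have hinvnn : ∀ v : Euc d, 0 ≤ (m v)⁻¹ := fun v => (hinvpos v).le
  -- doubling property of the inverse weight on unit scales
  obtain ⟨C₀, hC₀1, hdb⟩ : ∃ C₀ : ℝ, 1 ≤ C₀ ∧
      ∀ v w : Euc d, ‖v - w‖ ≤ 1 → (m v)⁻¹ ≤ C₀ * (m w)⁻¹ := by
    rcases hm with ⟨a, s, ha, hs, hfor⟩ | ⟨β, hβ, hfor⟩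
    · refine ⟨Real.exp a, Real.one_le_exp ha.le, fun v w hvw => ?_⟩
      rw [hfor, hfor, Real.exp_neg, Real.exp_neg, inv_inv, inv_inv, ← Real.exp_add]
      apply Real.exp_le_exp.2
      have h1 : ‖v‖ ≤ ‖w‖ + 1 := by
        have h2 := norm_sub_norm_le v w
        linarith
      have h2 : ‖v‖ ^ s ≤ (‖w‖ + 1) ^ s :=
        Real.rpow_le_rpow (norm_nonneg _) h1 hs.1.le
      have key : ((‖w‖ : ℝ) + 1) ^ s ≤ ‖w‖ ^ s + 1 ^ s := by
        have h := NNReal.rpow_add_le_add_rpow (Real.toNNReal ‖w‖) (Real.toNNReal 1)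
          hs.1.le hs.2
        have h' := NNReal.coe_le_coe.2 h
        push_cast [NNReal.coe_rpow] at h'
        simpa [Real.coe_toNNReal _ (norm_nonneg w), Real.toNNReal_one] using h'
      rw [Real.one_rpow] at key
      nlinarith [ha.le]
    · have h2β : (0:ℝ) < 2 ^ β := Real.rpow_pos_of_pos two_pos β
      refine ⟨1 + 2 ^ β, by linarith, fun v w hvw => ?_⟩
      rw [hfor, hfor, inv_inv, inv_inv]
      have h1 : ‖v‖ ≤ ‖w‖ + 1 := by
        have h2 := norm_sub_norm_le v w
        linarith
      have h2 : ‖v‖ ^ β ≤ (‖w‖ + 1) ^ β :=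
        Real.rpow_le_rpow (norm_nonneg _) h1 hβ.le
      have h3 : (‖w‖ + 1) ^ β ≤ 2 ^ β * (‖w‖ ^ β + 1) := by
        have hle : ‖w‖ + 1 ≤ 2 * max ‖w‖ 1 := by
          have hh1 := le_max_left ‖w‖ 1
          have hh2 := le_max_right ‖w‖ 1
          linarith
        have h4 : (‖w‖ + 1) ^ β ≤ (2 * max ‖w‖ 1) ^ β :=
          Real.rpow_le_rpow (by positivity) hle hβ.le
        rw [Real.mul_rpow (by norm_num) (by positivity)] at h4
        have h5 : (max ‖w‖ 1) ^ β ≤ ‖w‖ ^ β + 1 := by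
          rcases max_cases ‖w‖ 1 with ⟨hmx, _⟩ | ⟨hmx, _⟩
          · rw [hmx]; linarith
          · rw [hmx, Real.one_rpow]
            have := Real.rpow_nonneg (norm_nonneg w) β
            linarith
        calc (‖w‖ + 1) ^ β ≤ 2 ^ β * (max ‖w‖ 1) ^ β := h4
          _ ≤ 2 ^ β * (‖w‖ ^ β + 1) := by nlinarith
      have hWnn : (0:ℝ) ≤ ‖w‖ ^ β := Real.rpow_nonneg (norm_nonneg w) β
      nlinarith
  -- exponent bookkeeping
  obtain ⟨hγ0, hγd⟩ := hγ
  have hd3 : (3:ℝ) ≤ (d:ℝ) := by exact_mod_cast hd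
  have hdγ0 : (0:ℝ) < (d:ℝ) - γ - 1 := by linarith
  have hp0 : (0:ℝ) < p := lt_trans one_pos hp
  set α : ℝ := ((d:ℝ) - γ - 1) * p with hα_def
  have hα : 0 < α := by positivity
  have hαd : α < (d:ℝ) := by
    rw [hα_def, mul_comm]
    exact (lt_div_iff₀ hdγ0).1 hpd
  have hpq : p.HolderConjugate q := Real.holderConjugate_iff.2 ⟨hp, by rw [← one_div, ← one_div]; exact hq⟩
  have hq0 : (0:ℝ) < q := hpq.symm.pos
  have hpinv : (0:ℝ) ≤ 1 / p := by positivity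
  have hqinv : (0:ℝ) ≤ 1 / q := by positivity
  have hep : (γ + 1 - (d:ℝ)) * p = -α := by rw [hα_def]; ring
  have he_neg : γ + 1 - (d:ℝ) ≤ 0 := by linarith
  -- the singular integral constant
  have hKfin : (∫⁻ x in Metric.ball (0 : Euc d) 1, ENNReal.ofReal (‖x‖ ^ (-α))) < ∞ := by
    apply finiteK volume hα
    rw [finrank_euclideanSpace_fin]; exact hαd
  set K := ∫⁻ x in Metric.ball (0 : Euc d) 1, ENNReal.ofReal (‖x‖ ^ (-α)) with hK_def
  have hKp_ne : K ^ (1 / p) ≠ ∞ :=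
    (ENNReal.rpow_lt_top_of_nonneg hpinv hKfin.ne).ne
  set Kc : ℝ := (K ^ (1 / p)).toReal with hKc_def
  have hKc : K ^ (1 / p) = ENNReal.ofReal Kc := (ENNReal.ofReal_toReal hKp_ne).symm
  have hKc0 : 0 ≤ Kc := ENNReal.toReal_nonneg
  have hC₀0 : (0:ℝ) < C₀ := lt_of_lt_of_le one_pos hC₀1
  refine ⟨max (C₀ ^ (1 / p) * Kc) 1, lt_of_lt_of_le one_pos (le_max_right _ _),
    fun A hA w => ?_⟩
  set ν := ∫⁻ v in A, ENNReal.ofReal ((m v)⁻¹) with hν_def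
  set F : Euc d → ℝ≥0∞ :=
    fun v => ENNReal.ofReal (‖v - w‖ ^ (γ + 1 - (d:ℝ)) * (m v)⁻¹) with hF_def
  have hsplit : ∫⁻ v in A, F v ≤
      (∫⁻ v in A ∩ Metric.ball w 1, F v) + ∫⁻ v in A \ Metric.ball w 1, F v := by
    conv_lhs => rw [← Set.inter_union_diff A (Metric.ball w 1)]
    exact lintegral_union_le _ _ _
  -- far part
  have hfar : ∫⁻ v in A \ Metric.ball w 1, F v ≤ ν := by
    calc ∫⁻ v in A \ Metric.ball w 1, F v
        ≤ ∫⁻ v in A \ Metric.ball w 1, ENNReal.ofReal ((m v)⁻¹) := by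
          refine setLIntegral_mono' (hA.diff measurableSet_ball) fun v hv => ?_
          apply ENNReal.ofReal_le_ofReal
          have h1 : 1 ≤ ‖v - w‖ := by
            have h2 := hv.2
            rw [Metric.mem_ball, not_lt, dist_eq_norm] at h2
            exact h2
          have h2 : ‖v - w‖ ^ (γ + 1 - (d:ℝ)) ≤ 1 :=
            Real.rpow_le_one_of_one_le_of_nonpos h1 he_neg
          calc ‖v - w‖ ^ (γ + 1 - (d:ℝ)) * (m v)⁻¹ ≤ 1 * (m v)⁻¹ :=
              mul_le_mul_of_nonneg_right h2 (hinvnn v)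
            _ = (m v)⁻¹ := one_mul _
      _ ≤ ν := lintegral_mono_set diff_subset
  -- near part
  set S := A ∩ Metric.ball w 1 with hS_def
  set f : Euc d → ℝ≥0∞ :=
    fun v => ENNReal.ofReal (‖v - w‖ ^ (γ + 1 - (d:ℝ)) * ((m v)⁻¹) ^ (1 / p)) with hf_def
  set g : Euc d → ℝ≥0∞ := fun v => ENNReal.ofReal (((m v)⁻¹) ^ (1 / q)) with hg_def
  have hf_meas : Measurable f := by
    rw [hf_def]; fun_prop
  have hg_meas : Measurable g := by
    rw [hg_def]; fun_prop
  have hfeq : ∀ v : Euc d, F v = f v * g v := by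
    intro v
    rw [hf_def, hg_def]
    simp only
    rw [← ENNReal.ofReal_mul
        (mul_nonneg (Real.rpow_nonneg (norm_nonneg _) _) (Real.rpow_nonneg (hinvnn v) _)),
      mul_assoc, ← Real.rpow_add (hinvpos v), hq, Real.rpow_one]
  have hfp : ∀ v : Euc d, f v ^ p = ENNReal.ofReal (‖v - w‖ ^ (-α) * (m v)⁻¹) := by
    intro v
    rw [hf_def]
    simp only
    rw [ENNReal.ofReal_rpow_of_nonneg
        (mul_nonneg (Real.rpow_nonneg (norm_nonneg _) _) (Real.rpow_nonneg (hinvnn v) _)) hp0.le]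
    congr 1
    rw [Real.mul_rpow (Real.rpow_nonneg (norm_nonneg _) _) (Real.rpow_nonneg (hinvnn v) _),
      ← Real.rpow_mul (norm_nonneg _), ← Real.rpow_mul (hinvnn v), hep,
      show (1 : ℝ) / p * p = 1 by field_simp, Real.rpow_one]
  have hgq : ∀ v : Euc d, g v ^ q = ENNReal.ofReal ((m v)⁻¹) := by
    intro v
    rw [hg_def]
    simp only
    rw [ENNReal.ofReal_rpow_of_nonneg (Real.rpow_nonneg (hinvnn v) _) hq0.le,
      ← Real.rpow_mul (hinvnn v), show (1 : ℝ) / q * q = 1 by field_simp, Real.rpow_one]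
  have hInt1 : (∫⁻ v in S, f v ^ p) ≤ ENNReal.ofReal (C₀ * (m w)⁻¹) * K := by
    calc (∫⁻ v in S, f v ^ p)
        = ∫⁻ v in S, ENNReal.ofReal (‖v - w‖ ^ (-α) * (m v)⁻¹) :=
          lintegral_congr fun v => hfp v
      _ ≤ ∫⁻ v in Metric.ball w 1, ENNReal.ofReal (‖v - w‖ ^ (-α) * (m v)⁻¹) :=
          lintegral_mono_set inter_subset_right
      _ ≤ ∫⁻ v in Metric.ball w 1,
            ENNReal.ofReal (C₀ * (m w)⁻¹) * ENNReal.ofReal (‖v - w‖ ^ (-α)) := by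
          refine setLIntegral_mono' measurableSet_ball fun v hv => ?_
          rw [← ENNReal.ofReal_mul (mul_nonneg hC₀0.le (hinvnn w))]
          apply ENNReal.ofReal_le_ofReal
          have hvw : ‖v - w‖ ≤ 1 := (mem_ball_iff_norm.1 hv).le
          have hdb' := hdb v w hvw
          calc ‖v - w‖ ^ (-α) * (m v)⁻¹
              ≤ ‖v - w‖ ^ (-α) * (C₀ * (m w)⁻¹) :=
                mul_le_mul_of_nonneg_left hdb' (Real.rpow_nonneg (norm_nonneg _) _)
            _ = C₀ * (m w)⁻¹ * ‖v - w‖ ^ (-α) := mul_comm _ _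
      _ = ENNReal.ofReal (C₀ * (m w)⁻¹) *
            ∫⁻ v in Metric.ball w 1, ENNReal.ofReal (‖v - w‖ ^ (-α)) :=
          lintegral_const_mul' _ _ ENNReal.ofReal_ne_top
      _ = ENNReal.ofReal (C₀ * (m w)⁻¹) * K := by rw [transK α w]
  have hInt2 : (∫⁻ v in S, g v ^ q) ≤ ν := by
    calc (∫⁻ v in S, g v ^ q) = ∫⁻ v in S, ENNReal.ofReal ((m v)⁻¹) :=
          lintegral_congr fun v => hgq v
      _ ≤ ν := lintegral_mono_set inter_subset_left
  have hnear : ∫⁻ v in S, F v ≤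
      ENNReal.ofReal (C₀ ^ (1 / p) * Kc) *
        (ENNReal.ofReal ((m w)⁻¹ ^ (1 / p)) * ν ^ (1 / q)) := by
    calc ∫⁻ v in S, F v = ∫⁻ v in S, f v * g v := lintegral_congr fun v => hfeq v
      _ ≤ (∫⁻ v in S, f v ^ p) ^ (1 / p) * (∫⁻ v in S, g v ^ q) ^ (1 / q) := by
          simpa [Pi.mul_apply] using
            ENNReal.lintegral_mul_le_Lp_mul_Lq (volume.restrict S) hpq
              hf_meas.aemeasurable hg_meas.aemeasurable
      _ ≤ (ENNReal.ofReal (C₀ * (m w)⁻¹) * K) ^ (1 / p) * ν ^ (1 / q) :=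
          mul_le_mul' (ENNReal.rpow_le_rpow hInt1 hpinv) (ENNReal.rpow_le_rpow hInt2 hqinv)
      _ = ENNReal.ofReal (C₀ ^ (1 / p) * Kc) *
            (ENNReal.ofReal ((m w)⁻¹ ^ (1 / p)) * ν ^ (1 / q)) := by
          rw [ENNReal.mul_rpow_of_nonneg _ _ hpinv, hKc,
            ENNReal.ofReal_rpow_of_nonneg (mul_nonneg hC₀0.le (hinvnn w)) hpinv,
            Real.mul_rpow hC₀0.le (hinvnn w),
            ENNReal.ofReal_mul (Real.rpow_nonneg hC₀0.le _),
            ENNReal.ofReal_mul (Real.rpow_nonneg hC₀0.le _)]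
          ring
  -- combine
  have h1le : (1 : ℝ≥0∞) ≤ ENNReal.ofReal (max (C₀ ^ (1 / p) * Kc) 1) := by
    rw [ENNReal.one_le_ofReal]
    exact le_max_right _ _
  calc ∫⁻ v in A, F v
      ≤ (∫⁻ v in S, F v) + ∫⁻ v in A \ Metric.ball w 1, F v := hsplit
    _ ≤ ENNReal.ofReal (C₀ ^ (1 / p) * Kc) *
          (ENNReal.ofReal ((m w)⁻¹ ^ (1 / p)) * ν ^ (1 / q)) + ν := add_le_add hnear hfar
    _ ≤ ENNReal.ofReal (max (C₀ ^ (1 / p) * Kc) 1) *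
          (ENNReal.ofReal ((m w)⁻¹ ^ (1 / p)) * ν ^ (1 / q)) +
        ENNReal.ofReal (max (C₀ ^ (1 / p) * Kc) 1) * ν :=
        add_le_add
          (mul_le_mul_left (ENNReal.ofReal_le_ofReal (le_max_left _ _)) _)
          (le_mul_of_one_le_left zero_le h1le)
    _ = ENNReal.ofReal (max (C₀ ^ (1 / p) * Kc) 1) *
          (ENNReal.ofReal ((m w)⁻¹ ^ (1 / p)) * ν ^ (1 / q) + ν) := (mul_add _ _ _).symm


end
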